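/- Every finite k-player game (k ≥ 2) with all payoffs in [0,1] has a (1 − 1/k)-approximate Nash equilibrium in which every player's mixed strategy is supported on at most 2 pure strategies. -/

import Mathlib

/-- A mixed strategy: a probability distribution on a finite set of pure strategies. -/
def IsMixed {σ : Type*} [Fintype σ] (x : σ → ℝ) : Prop :=
  (∀ a, 0 ≤ x a) ∧ ∑ a, x a = 1

/-- A mixed-strategy profile: one mixed strategy per player. -/
def IsProfile {k : ℕ} {S : Fin k → Type*} [∀ i, Fintype (S i)]
    (x : ∀ i, S i → ℝ) : Prop := ∀ i, IsMixed (x i)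

/-- Player's expected payoff under a mixed-strategy profile. -/
noncomputable def expectedPayoff {k : ℕ} {S : Fin k → Type*} [∀ i, Fintype (S i)]
    (u : (∀ i, S i) → ℝ) (x : ∀ i, S i → ℝ) : ℝ :=
  ∑ s : ∀ i, S i, u s * ∏ i, x i (s i)

/-- `ε`-approximate Nash equilibrium: no player can improve his expected payoff by
more than `ε` via a unilateral deviation to any mixed strategy. -/
def IsEpsApproxNash {k : ℕ} {S : Fin k → Type*} [∀ i, Fintype (S i)]
    (u : ∀ i : Fin k, (∀ i, S i) → ℝ) (ε : ℝ) (x : ∀ i, S i → ℝ) : Prop :=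
  ∀ (i : Fin k) (y : S i → ℝ), IsMixed y →
    expectedPayoff (u i) (Function.update x i y) - ε ≤ expectedPayoff (u i) x

open Finset

/-! ### Telescoping product lemmas over ℕ -/

lemma prod_tele (n : ℕ) : ∀ K, n < K →
    ∏ m ∈ range K, (if m ≤ n then (1:ℝ) else (m:ℝ)/((m:ℝ)+1)) = ((n:ℝ)+1)/(K:ℝ) := by
  intro K
  induction K with
  | zero => intro h; omega
  | succ K ih =>
    intro h
    rcases Nat.lt_or_ge n K with hlt | hge
    · rw [Finset.prod_range_succ, ih hlt, if_neg (by omega)]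
      have hK : (K:ℝ) ≠ 0 := by
        have : 0 < K := by omega
        positivity
      have hK1 : (K:ℝ) + 1 ≠ 0 := by positivity
      push_cast
      field_simp
      try ring
    · have he : n = K := by omega
      subst he
      rw [Finset.prod_range_succ, if_pos le_rfl, mul_one,
        Finset.prod_eq_one (fun m hm => if_pos (le_of_lt (mem_range.mp hm)))]
      have hn1 : ((n:ℝ)+1) ≠ 0 := by positivity
      push_cast
      field_simp

lemma prod_tele' (n : ℕ) : ∀ K, n < K →
    ∏ m ∈ range K, (if m < n then (1:ℝ) else if m = n then 1/((n:ℝ)+1)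
      else (m:ℝ)/((m:ℝ)+1)) = 1/(K:ℝ) := by
  intro K
  induction K with
  | zero => intro h; omega
  | succ K ih =>
    intro h
    rcases Nat.lt_or_ge n K with hlt | hge
    · rw [Finset.prod_range_succ, ih hlt, if_neg (by omega), if_neg (by omega)]
      have hK : (K:ℝ) ≠ 0 := by
        have : 0 < K := by omega
        positivity
      have hK1 : (K:ℝ) + 1 ≠ 0 := by positivity
      push_cast
      field_simp
    · have he : n = K := by omega
      subst he
      rw [Finset.prod_range_succ, if_neg (lt_irrefl n), if_pos rfl,
        Finset.prod_eq_one (fun m hm => if_pos (mem_range.mp hm)), one_mul]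
      push_cast
      ring

section AuxNash

open Classical in
/-- a pure strategy viewed as a mixed strategy -/
noncomputable def pureS {σ : Type*} (a : σ) : σ → ℝ := fun c => if c = a then 1 else 0

lemma pureS_nonneg {σ : Type*} (a c : σ) : 0 ≤ pureS a c := by
  unfold pureS; split <;> norm_num

lemma pureS_mixed {σ : Type*} [Fintype σ] (a : σ) : IsMixed (pureS a) := by
  classical
  refine ⟨pureS_nonneg a, ?_⟩
  simp [pureS]

variable {k : ℕ} {S : Fin k → Type*} [∀ i, Fintype (S i)] [∀ i, Nonempty (S i)]

noncomputable def brS (u : (∀ i, S i) → ℝ) (p : ∀ j, S j → ℝ) (i : Fin k) : S i :=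
  Classical.choose
    (Finite.exists_max fun a => expectedPayoff u (Function.update p i (pureS a)))

lemma brS_spec (u : (∀ i, S i) → ℝ) (p : ∀ j, S j → ℝ) (i : Fin k) (a : S i) :
    expectedPayoff u (Function.update p i (pureS a)) ≤
      expectedPayoff u (Function.update p i (pureS (brS u p i))) :=
  Classical.choose_spec
    (Finite.exists_max fun a => expectedPayoff u (Function.update p i (pureS a))) a

noncomputable def mixS (u : (∀ i, S i) → ℝ) (t : ∀ j, S j) (p : ∀ j, S j → ℝ)
    (i : Fin k) : S i → ℝ :=
  fun c => (1 - 1/((i.val:ℝ)+1)) * pureS (t i) c + (1/((i.val:ℝ)+1)) * pureS (brS u p i) c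

noncomputable def Ynat (u : ∀ i : Fin k, (∀ i, S i) → ℝ) (t : ∀ j, S j) :
    ℕ → ∀ j : Fin k, S j → ℝ
  | 0 => fun j => pureS (t j)
  | n+1 =>
    if h : n < k then
      Function.update (Ynat u t n) ⟨n, h⟩ (mixS (u ⟨n,h⟩) t (Ynat u t n) ⟨n,h⟩)
    else Ynat u t n

variable (u : ∀ i : Fin k, (∀ i, S i) → ℝ) (t : ∀ j, S j)

lemma Ynat_high : ∀ n (j : Fin k), n ≤ j.val → Ynat u t n j = pureS (t j) := by
  intro n
  induction n with
  | zero => intro j _; rfl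
  | succ n ih =>
    intro j hj
    simp only [Ynat]
    by_cases h : n < k
    · rw [dif_pos h, Function.update_of_ne, ih j (Nat.le_of_succ_le hj)]
      intro he
      rw [he] at hj
      simp at hj
    · rw [dif_neg h, ih j (Nat.le_of_succ_le hj)]

lemma Ynat_stable : ∀ m n, n ≤ m → ∀ j : Fin k, j.val < n →
    Ynat u t m j = Ynat u t n j := by
  intro m
  induction m with
  | zero => intro n hn j hj; omega
  | succ m ih =>
    intro n hn j hj
    rcases Nat.eq_or_lt_of_le hn with he | hlt
    · rw [he]
    · have hnm : n ≤ m := by omega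
      simp only [Ynat]
      by_cases h : m < k
      · rw [dif_pos h, Function.update_of_ne, ih n hnm j hj]
        intro he'
        have : j.val = m := by rw [he']
        omega
      · rw [dif_neg h, ih n hnm j hj]

lemma Ynat_succ_self (i : Fin k) :
    Ynat u t (i.val+1) i = mixS (u i) t (Ynat u t i.val) i := by
  simp only [Ynat]
  rw [dif_pos i.isLt]
  exact Function.update_self _ _ _

lemma mixS_mixed (v : (∀ i, S i) → ℝ) (p : ∀ j, S j → ℝ) (i : Fin k) :
    IsMixed (mixS v t p i) := by
  have h0 : (0:ℝ) ≤ 1/((i.val:ℝ)+1) := by positivity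
  have h1 : (1:ℝ)/((i.val:ℝ)+1) ≤ 1 := by
    rw [div_le_one (by positivity)]
    have : (0:ℝ) ≤ (i.val:ℝ) := Nat.cast_nonneg _
    linarith
  constructor
  · intro a
    have ha := pureS_nonneg (t i) a
    have hb := pureS_nonneg (brS v p i) a
    have hc : (0:ℝ) ≤ 1 - 1/((i.val:ℝ)+1) := by linarith
    unfold mixS
    have := mul_nonneg hc ha
    have := mul_nonneg h0 hb
    linarith
  · unfold mixS
    rw [Finset.sum_add_distrib, ← Finset.mul_sum, ← Finset.mul_sum,
      (pureS_mixed (t i)).2, (pureS_mixed (brS v p i)).2]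
    ring

lemma Ynat_profile : ∀ n, IsProfile (Ynat u t n) := by
  intro n
  induction n with
  | zero => intro j; exact pureS_mixed (t j)
  | succ n ih =>
    intro j
    simp only [Ynat]
    by_cases h : n < k
    · rw [dif_pos h]
      by_cases hj : j = (⟨n, h⟩ : Fin k)
      · subst hj
        rw [Function.update_self]
        exact mixS_mixed t _ _ _
      · rw [Function.update_of_ne hj]
        exact ih j
    · rw [dif_neg h]; exact ih j

lemma profile_update {p : ∀ j, S j → ℝ} (hp : IsProfile p) {i : Fin k} {y : S i → ℝ}
    (hy : IsMixed y) : IsProfile (Function.update p i y) := by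
  intro j
  by_cases hj : j = i
  · subst hj; rw [Function.update_self]; exact hy
  · rw [Function.update_of_ne hj]; exact hp j

lemma sum_prod_profile {p : ∀ j, S j → ℝ} (hp : IsProfile p) :
    ∑ s : ∀ j, S j, ∏ j, p j (s j) = 1 := by
  classical
  rw [← Fintype.prod_sum]
  exact Finset.prod_eq_one fun j _ => (hp j).2

lemma prod_profile_nonneg {p : ∀ j, S j → ℝ} (hp : IsProfile p) (s : ∀ j, S j) :
    0 ≤ ∏ j, p j (s j) :=
  Finset.prod_nonneg fun j _ => (hp j).1 (s j)

lemma EP_le_one {v : (∀ i, S i) → ℝ} (hv : ∀ s, v s ≤ 1) {p : ∀ j, S j → ℝ}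
    (hp : IsProfile p) : expectedPayoff v p ≤ 1 := by
  calc expectedPayoff v p ≤ ∑ s : ∀ j, S j, ∏ j, p j (s j) := by
        apply Finset.sum_le_sum
        intro s _
        calc v s * ∏ j, p j (s j) ≤ 1 * ∏ j, p j (s j) :=
              mul_le_mul_of_nonneg_right (hv s) (prod_profile_nonneg hp s)
          _ = ∏ j, p j (s j) := one_mul _
    _ = 1 := sum_prod_profile hp

lemma prod_update_apply (p : ∀ j, S j → ℝ) (i : Fin k) (z : S i → ℝ) (s : ∀ j, S j) :
    ∏ j, Function.update p i z j (s j) = z (s i) * ∏ j ∈ univ.erase i, p j (s j) := by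
  classical
  rw [← Finset.mul_prod_erase Finset.univ (fun j => Function.update p i z j (s j))
    (Finset.mem_univ i)]
  congr 1
  · rw [Function.update_self]
  · apply Finset.prod_congr rfl
    intro j hj
    rw [Function.update_of_ne (Finset.ne_of_mem_erase hj)]

lemma EP_update_linear (v : (∀ i, S i) → ℝ) (p : ∀ j, S j → ℝ) (i : Fin k)
    (y : S i → ℝ) :
    expectedPayoff v (Function.update p i y) =
      ∑ a, y a * expectedPayoff v (Function.update p i (pureS a)) := by
  classical
  have L : expectedPayoff v (Function.update p i y) =
      ∑ s : ∀ j, S j, y (s i) * (v s * ∏ j ∈ univ.erase i, p j (s j)) := by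
    unfold expectedPayoff
    apply Finset.sum_congr rfl
    intro s _
    rw [prod_update_apply]
    ring
  have R : ∀ a : S i, y a * expectedPayoff v (Function.update p i (pureS a)) =
      ∑ s : ∀ j, S j, y a * (pureS a (s i) * (v s * ∏ j ∈ univ.erase i, p j (s j))) := by
    intro a
    unfold expectedPayoff
    rw [Finset.mul_sum]
    apply Finset.sum_congr rfl
    intro s _
    rw [prod_update_apply]
    ring
  rw [L, Finset.sum_congr rfl (fun a _ => R a), Finset.sum_comm]
  apply Finset.sum_congr rfl
  intro s _
  have hterm : ∀ a : S i, y a * (pureS a (s i) * (v s * ∏ j ∈ univ.erase i, p j (s j)))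
      = if s i = a then y a * (v s * ∏ j ∈ univ.erase i, p j (s j)) else 0 := by
    intro a
    unfold pureS
    by_cases h : s i = a <;> simp [h]
  rw [Finset.sum_congr rfl (fun a _ => hterm a), Finset.sum_ite_eq]
  simp

end AuxNash

/-- Every finite `k`-player game (`k ≥ 2`) with payoffs in `[0,1]` has a
`(1 - 1/k)`-approximate Nash equilibrium in which every player's mixed strategy is
supported on at most two pure strategies. -/
theorem exists_approx_nash_small_support {k : ℕ} (hk : 2 ≤ k)
    (S : Fin k → Type*) [∀ i, Fintype (S i)] [∀ i, Nonempty (S i)]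
    (u : ∀ i : Fin k, (∀ i, S i) → ℝ)
    (hu : ∀ i s, u i s ∈ Set.Icc (0 : ℝ) 1) :
    ∃ x : ∀ i, S i → ℝ, IsProfile x ∧
      IsEpsApproxNash u (1 - 1 / (k : ℝ)) x ∧
      ∀ i : Fin k, ∃ a b : S i, ∀ c : S i, x i c ≠ 0 → c = a ∨ c = b := by
  classical
  have hk0 : (0:ℝ) < k := by
    have : 0 < k := by omega
    positivity
  set t : ∀ j, S j := fun j => Classical.arbitrary (S j) with ht
  set X : ∀ j, S j → ℝ := Ynat u t k with hX
  have hXprof : IsProfile X := Ynat_profile u t k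
  have hXmix : ∀ i : Fin k, X i = mixS (u i) t (Ynat u t i.val) i := by
    intro i
    rw [hX, Ynat_stable u t k (i.val+1) (by omega) i (by omega)]
    exact Ynat_succ_self u t i
  refine ⟨X, hXprof, ?_, ?_⟩
  · -- approximate Nash
    intro i y hy
    set n := i.val with hn
    have hnk : n < k := i.isLt
    set P : ∀ j, S j → ℝ := Ynat u t n with hPdef
    have hPprof : IsProfile P := Ynat_profile u t n
    set b : S i := brS (u i) P i with hb
    have hXi : X i = mixS (u i) t P i := hXmix i
    have hXlt : ∀ j : Fin k, j.val < n → X j = P j := fun j hj => by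
      rw [hX, hPdef, Ynat_stable u t k n (le_of_lt hnk) j hj]
    have hPge : ∀ j : Fin k, n ≤ j.val → P j = pureS (t j) := fun j hj =>
      Ynat_high u t n j hj
    have hXgt : ∀ (j : Fin k), n < j.val → ∀ a,
        ((j.val:ℝ)/((j.val:ℝ)+1)) * pureS (t j) a ≤ X j a := by
      intro j hj a
      rw [hXmix j]
      unfold mixS
      have h1 : ((j.val:ℝ)/((j.val:ℝ)+1)) = 1 - 1/((j.val:ℝ)+1) := by
        have : ((j.val:ℝ)+1) ≠ 0 := by positivity
        field_simp
        ring
      rw [h1]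
      have h2 : (0:ℝ) ≤ (1/((j.val:ℝ)+1)) * pureS (brS (u j) (Ynat u t j.val) j) a :=
        mul_nonneg (by positivity) (pureS_nonneg _ _)
      linarith
    have hXib : ∀ a, (1/((n:ℝ)+1)) * pureS b a ≤ X i a := by
      intro a
      rw [hXi]
      unfold mixS
      have h1 : (1:ℝ)/((n:ℝ)+1) ≤ 1 := by
        rw [div_le_one (by positivity)]
        have : (0:ℝ) ≤ (n:ℝ) := Nat.cast_nonneg _
        linarith
      have h2 : (0:ℝ) ≤ (1 - 1/((n:ℝ)+1)) * pureS (t i) a :=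
        mul_nonneg (by linarith) (pureS_nonneg _ _)
      rw [← hb]
      linarith
    -- the "conditional" payoffs
    have hqprof : IsProfile (Function.update P i y) := profile_update hPprof hy
    have hQprof : IsProfile (Function.update P i (pureS b)) :=
      profile_update hPprof (pureS_mixed b)
    set w : ℝ := expectedPayoff (u i) (Function.update P i (pureS b)) with hw
    set Wy : ℝ := expectedPayoff (u i) (Function.update P i y) with hWy
    have hWyw : Wy ≤ w := by
      rw [hWy, EP_update_linear]
      have hsum : w = ∑ a, y a * w := by
        rw [← Finset.sum_mul, hy.2, one_mul]
      rw [hsum]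
      apply Finset.sum_le_sum
      intro a _
      exact mul_le_mul_of_nonneg_left (brS_spec (u i) P i a) (hy.1 a)
    have hw1 : w ≤ 1 := EP_le_one (fun s => (hu i s).2) hQprof
    -- Claim B : w / k ≤ payoff of X
    have hCprod : ∏ j : Fin k,
        (if (j:ℕ) < n then (1:ℝ) else if (j:ℕ) = n then 1/((n:ℝ)+1)
          else ((j:ℕ):ℝ)/(((j:ℕ):ℝ)+1)) = 1/(k:ℝ) := by
      rw [Fin.prod_univ_eq_prod_range
        (fun m => if m < n then (1:ℝ) else if m = n then 1/((n:ℝ)+1)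
          else (m:ℝ)/((m:ℝ)+1)) k]
      exact prod_tele' n k hnk
    have keyB : ∀ s : ∀ j, S j,
        (1/(k:ℝ)) * ∏ j, Function.update P i (pureS b) j (s j) ≤ ∏ j, X j (s j) := by
      intro s
      rw [← hCprod, ← Finset.prod_mul_distrib]
      apply Finset.prod_le_prod
      · intro j _
        apply mul_nonneg _ ((hQprof j).1 (s j))
        split
        · norm_num
        · split
          · positivity
          · positivity
      · intro j _
        rcases lt_trichotomy (j:ℕ) n with h | h | h
        · rw [if_pos h, one_mul, Function.update_of_ne (by
            intro he; rw [he] at h; omega), ← hXlt j h]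
        · have hji : j = i := Fin.ext h
          subst hji
          rw [if_neg (lt_irrefl _), if_pos h, Function.update_self]
          exact hXib (s j)
        · rw [if_neg (by omega), if_neg (by omega), Function.update_of_ne (by
            intro he; rw [he] at h; omega), hPge j (le_of_lt h)]
          exact hXgt j h (s j)
    have hB : (1/(k:ℝ)) * w ≤ expectedPayoff (u i) X := by
      rw [hw]
      unfold expectedPayoff
      rw [Finset.mul_sum]
      apply Finset.sum_le_sum
      intro s _
      calc (1/(k:ℝ)) * (u i s * ∏ j, Function.update P i (pureS b) j (s j))
          = u i s * ((1/(k:ℝ)) * ∏ j, Function.update P i (pureS b) j (s j)) := by ring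
        _ ≤ u i s * ∏ j, X j (s j) :=
            mul_le_mul_of_nonneg_left (keyB s) ((hu i s).1)
    -- Claim A
    have hDprod : ∏ j : Fin k,
        (if (j:ℕ) ≤ n then (1:ℝ) else ((j:ℕ):ℝ)/(((j:ℕ):ℝ)+1)) = ((n:ℝ)+1)/(k:ℝ) := by
      rw [Fin.prod_univ_eq_prod_range
        (fun m => if m ≤ n then (1:ℝ) else (m:ℝ)/((m:ℝ)+1)) k]
      exact prod_tele n k hnk
    have keyA : ∀ s : ∀ j, S j,
        (((n:ℝ)+1)/(k:ℝ)) * ∏ j, Function.update P i y j (s j) ≤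
          ∏ j, Function.update X i y j (s j) := by
      intro s
      rw [← hDprod, ← Finset.prod_mul_distrib]
      apply Finset.prod_le_prod
      · intro j _
        apply mul_nonneg _ ((hqprof j).1 (s j))
        split
        · norm_num
        · positivity
      · intro j _
        rcases lt_trichotomy (j:ℕ) n with h | h | h
        · have hji : j ≠ i := by intro he; rw [he] at h; omega
          rw [if_pos (le_of_lt h), one_mul, Function.update_of_ne hji,
            Function.update_of_ne hji, ← hXlt j h]
        · have hji : j = i := Fin.ext h
          subst hji
          rw [if_pos (le_of_eq h), one_mul, Function.update_self, Function.update_self]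
        · have hji : j ≠ i := by intro he; rw [he] at h; omega
          rw [if_neg (by omega), Function.update_of_ne hji,
            Function.update_of_ne hji, hPge j (le_of_lt h)]
          exact hXgt j h (s j)
    have hupXprof : IsProfile (Function.update X i y) := profile_update hXprof hy
    have hA : expectedPayoff (u i) (Function.update X i y) -
        (((n:ℝ)+1)/(k:ℝ)) * Wy ≤ 1 - ((n:ℝ)+1)/(k:ℝ) := by
      rw [hWy]
      unfold expectedPayoff
      rw [Finset.mul_sum, ← Finset.sum_sub_distrib]
      have hsum : ∑ s : ∀ j, S j, (∏ j, Function.update X i y j (s j) -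
          (((n:ℝ)+1)/(k:ℝ)) * ∏ j, Function.update P i y j (s j))
          = 1 - ((n:ℝ)+1)/(k:ℝ) := by
        rw [Finset.sum_sub_distrib, sum_prod_profile hupXprof, ← Finset.mul_sum,
          sum_prod_profile hqprof, mul_one]
      rw [← hsum]
      apply Finset.sum_le_sum
      intro s _
      have h1 : u i s ≤ 1 := (hu i s).2
      have h0 : 0 ≤ u i s := (hu i s).1
      have hbr := keyA s
      nlinarith [hbr, h1, h0]
    -- combine
    have hκ0 : (0:ℝ) ≤ ((n:ℝ)+1)/(k:ℝ) := by positivity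
    have hκ1 : 1/(k:ℝ) ≤ ((n:ℝ)+1)/(k:ℝ) := by
      have h1 : (1:ℝ) ≤ (n:ℝ)+1 := by
        have := Nat.cast_nonneg (α := ℝ) n
        linarith
      exact (div_le_div_iff_of_pos_right hk0).mpr h1
    have step1 : expectedPayoff (u i) (Function.update X i y) ≤
        (((n:ℝ)+1)/(k:ℝ)) * w + (1 - ((n:ℝ)+1)/(k:ℝ)) := by
      nlinarith [mul_le_mul_of_nonneg_left hWyw hκ0, hA]
    have step2 : (((n:ℝ)+1)/(k:ℝ)) * w + (1 - ((n:ℝ)+1)/(k:ℝ)) - (1 - 1/(k:ℝ)) ≤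
        (1/(k:ℝ)) * w := by
      nlinarith [mul_nonneg (sub_nonneg.mpr hκ1) (sub_nonneg.mpr hw1)]
    linarith [step1, step2, hB]
  · -- small support
    intro i
    refine ⟨t i, brS (u i) (Ynat u t i.val) i, ?_⟩
    intro c hc
    by_contra hcon
    push_neg at hcon
    apply hc
    rw [hXmix i]
    unfold mixS pureS
    rw [if_neg hcon.1, if_neg hcon.2]
    ring
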